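/- arXiv:2510.20000 — 2 statements merged into one kernel-verified Lean document; each statement's English description precedes it below -/
import Mathlib

section
/- Let b_x, d_x > 0 for x ≥ 1 be birth and death rates of a birth-and-death chain. Suppose there exist M > 1 and q > 1 such that for all x ≥ M, b_x/d_x ≥ 1 + 1/x + q/(x log x). Then the series Σ_{x=1}^∞ Π_{y=1}^x (d_y/b_y) converges (i.e., is finite). -/
open Real Finset

lemma aux_summable14 {r : ℝ} (hr : 1 < r) :
    Summable (fun n : ℕ => ((n : ℝ) * (max 1 (Real.log n)) ^ r)⁻¹) := by
  have hr0 : (0:ℝ) ≤ r := by linarith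
  have hnonneg : ∀ n : ℕ, 0 ≤ ((n : ℝ) * (max 1 (Real.log n)) ^ r)⁻¹ := by
    intro n
    have h1 : (0:ℝ) ≤ max 1 (Real.log n) := le_max_of_le_left zero_le_one
    positivity
  rw [← summable_condensed_iff_of_nonneg hnonneg]
  · -- condensed series
    have hlog2 : (0:ℝ) < Real.log 2 := Real.log_pos one_lt_two
    set c : ℝ := Real.log 2 / 2 with hc
    have hc0 : 0 < c := by positivity
    have hle : ∀ k : ℕ, (2:ℝ) ^ k * (((2^k : ℕ) : ℝ) * (max 1 (Real.log ((2:ℕ)^k : ℕ))) ^ r)⁻¹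
        ≤ (c ^ r)⁻¹ * ((((k:ℝ) + 1)) ^ r)⁻¹ := by
      intro k
      have h2k : ((2^k : ℕ) : ℝ) = (2:ℝ) ^ k := by push_cast; ring
      have hlogpow : Real.log (((2:ℕ)^k : ℕ) : ℝ) = k * Real.log 2 := by
        rw [h2k, Real.log_pow]
      have hkey : c * ((k:ℝ) + 1) ≤ max 1 ((k:ℝ) * Real.log 2) := by
        rcases Nat.eq_zero_or_pos k with rfl | hk
        · simp only [Nat.cast_zero, zero_add, mul_one]
          have := Real.log_two_lt_d9
          calc c = Real.log 2 / 2 := rfl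
            _ ≤ 1 := by nlinarith [Real.log_two_lt_d9]
            _ ≤ max 1 ((0:ℝ) * Real.log 2) := le_max_left _ _
        · have hk1 : (1:ℝ) ≤ (k:ℝ) := by exact_mod_cast hk
          have : c * ((k:ℝ) + 1) ≤ (k:ℝ) * Real.log 2 := by
            rw [hc]; nlinarith
          exact this.trans (le_max_right _ _)
      have hmaxpos : (0:ℝ) < max 1 ((k:ℝ) * Real.log 2) := lt_of_lt_of_le one_pos (le_max_left _ _)
      have hrpow : (c * ((k:ℝ) + 1)) ^ r ≤ (max 1 ((k:ℝ) * Real.log 2)) ^ r :=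
        Real.rpow_le_rpow (by positivity) hkey hr0
      rw [Real.mul_rpow hc0.le (by positivity)] at hrpow
      have h2kpos : (0:ℝ) < (2:ℝ) ^ k := by positivity
      rw [hlogpow, h2k]
      rw [mul_inv, ← mul_assoc, mul_inv_cancel₀ h2kpos.ne', one_mul, ← mul_inv]
      apply inv_anti₀ (by positivity)
      exact hrpow
    apply Summable.of_nonneg_of_le
    · intro k
      have h1 : (0:ℝ) ≤ max 1 (Real.log (((2:ℕ)^k : ℕ) : ℝ)) := le_max_of_le_left zero_le_one
      positivity
    · exact hle
    · apply Summable.mul_left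
      have hbase : Summable (fun n : ℕ => ((n : ℝ) ^ r)⁻¹) :=
        Real.summable_nat_rpow_inv.mpr hr
      have := (summable_nat_add_iff 1).mpr hbase
      convert this using 2 with k
      push_cast
      · rfl
      · norm_num
  · -- antitone
    intro m n hm hmn
    have hm' : (0:ℝ) < (m:ℝ) := by exact_mod_cast hm
    have hn' : (m:ℝ) ≤ (n:ℝ) := by exact_mod_cast hmn
    apply inv_anti₀
    · have h1 : (0:ℝ) < max 1 (Real.log m) := lt_of_lt_of_le one_pos (le_max_left _ _)
      positivity
    · apply mul_le_mul hn'
      · apply Real.rpow_le_rpow (le_max_of_le_left zero_le_one)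
        · exact max_le_max le_rfl (Real.log_le_log hm' hn')
        · exact hr0
      · positivity
      · positivity

set_option maxHeartbeats 1000000 in
theorem stmt14 (b d : ℕ → ℝ)
    (hb : ∀ x ≥ 1, 0 < b x) (hd : ∀ x ≥ 1, 0 < d x)
    (M : ℕ) (hM : 1 < M) (q : ℝ) (hq : 1 < q)
    (h : ∀ x : ℕ, M ≤ x →
      b x / d x ≥ 1 + 1/(x : ℝ) + q/((x : ℝ) * Real.log (x : ℝ))) :
    Summable (fun x : ℕ => ∏ y ∈ Finset.Icc 1 x, d y / b y) := by
  classical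
  -- parameters
  set δ : ℝ := min ((q-1)/2) (1/2) with hδdef
  have hδ0 : 0 < δ := lt_min (by linarith) (by norm_num)
  have hδhalf : δ ≤ 1/2 := min_le_right _ _
  have hδq : 1 + 2*δ ≤ q := by
    have : δ ≤ (q-1)/2 := min_le_left _ _
    linarith
  clear_value δ
  set r : ℝ := 1 + δ with hrdef
  have hr1 : 1 < r := by rw [hrdef]; linarith
  clear_value r
  set N : ℕ := max (max M 3) (⌈5/δ⌉₊ + 1) with hNdef
  have hNM : M ≤ N := le_trans (le_max_left _ _) (le_max_left _ _)
  have hN3 : 3 ≤ N := le_trans (le_max_right _ _) (le_max_left _ _)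
  have hNδ : 5/δ ≤ (N:ℝ) := by
    have h1 : (⌈5/δ⌉₊ + 1 : ℕ) ≤ N := le_max_right _ _
    have h2 : 5/δ ≤ (⌈5/δ⌉₊ : ℝ) := Nat.le_ceil _
    calc 5/δ ≤ (⌈5/δ⌉₊ : ℝ) := h2
      _ ≤ ((⌈5/δ⌉₊ + 1 : ℕ) : ℝ) := by push_cast; linarith
      _ ≤ (N:ℝ) := by exact_mod_cast h1
  clear_value N
  set f : ℕ → ℝ := fun n => ((n : ℝ) * (max 1 (Real.log n)) ^ r)⁻¹ with hfdef
  have hfpos : ∀ n : ℕ, 1 ≤ n → 0 < f n := by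
    intro n hn
    have hn' : (0:ℝ) < (n:ℝ) := by exact_mod_cast hn
    have h1 : (0:ℝ) < max 1 (Real.log n) := lt_of_lt_of_le one_pos (le_max_left _ _)
    simp only [hfdef]
    positivity
  have hexp1 : Real.exp 1 ≤ 3 := by
    have := Real.exp_one_lt_d9
    linarith
  have hlogge : ∀ n : ℕ, 3 ≤ n → 1 ≤ Real.log n := by
    intro n hn
    have hn' : (3:ℝ) ≤ (n:ℝ) := by exact_mod_cast hn
    rw [Real.le_log_iff_exp_le (by linarith)]
    linarith
  -- key step inequality
  have keystep : ∀ x : ℕ, N ≤ x →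
      f (x+1) ≤ (1 + 1/((x:ℝ)+1) + q/(((x:ℝ)+1) * Real.log ((x:ℝ)+1))) * f (x+2) := by
    intro x hx
    set X : ℝ := (x:ℝ) with hXdef
    have hX3 : (3:ℝ) ≤ X := by
      have h3 : (3:ℕ) ≤ x := le_trans hN3 hx
      rw [hXdef]
      exact_mod_cast h3
    have hXδ : 5/δ ≤ X := le_trans hNδ (by rw [hXdef]; exact_mod_cast hx)
    have hL1 : 1 ≤ Real.log (X+1) := by
      have := hlogge (x+1) (by omega)
      rwa [Nat.cast_add, Nat.cast_one] at this
    have hL2 : 1 ≤ Real.log (X+2) := by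
      have := hlogge (x+2) (by omega)
      rwa [Nat.cast_add, Nat.cast_ofNat] at this
    set L₁ : ℝ := Real.log (X+1) with hL1def
    set L₂ : ℝ := Real.log (X+2) with hL2def
    set u : ℝ := 1/(X+1) with hudef
    set t : ℝ := 1/((X+1)*L₁) with htdef
    have hu0 : 0 < u := by positivity
    have ht0 : 0 < t := by
      have : 0 < L₁ := by linarith
      positivity
    have htu : t ≤ u := by
      rw [htdef, hudef]
      apply div_le_div_of_nonneg_left one_pos.le (by positivity)
      nlinarith
    have huδ : u ≤ δ/5 := by
      rw [hudef, div_le_div_iff₀ (by positivity) (by positivity)]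
      have : 5/δ ≤ X := hXδ
      rw [div_le_iff₀ hδ0] at this
      nlinarith
    -- Step A : L₂ ≤ L₁ * (1 + t)
    have hA : L₂ ≤ L₁ * (1 + t) := by
      have hlog : L₂ - L₁ = Real.log ((X+2)/(X+1)) := by
        rw [hL2def, hL1def, Real.log_div (by linarith) (by linarith)]
      have hb : Real.log ((X+2)/(X+1)) ≤ (X+2)/(X+1) - 1 :=
        Real.log_le_sub_one_of_pos (by positivity)
      have he : (X+2)/(X+1) - 1 = u := by
        rw [hudef]
        field_simp
        try norm_num
      have hL1ne : L₁ ≠ 0 := by linarith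
      have hLt : L₁ * t = u := by
        rw [htdef, hudef, mul_one_div, mul_comm (X+1) L₁, ← div_div, div_self hL1ne]
      nlinarith [hlog, hb, he, hLt]
    -- Step B+C : L₂^r ≤ L₁^r * ((1+t)*(1+δ*t))
    have hBC : L₂ ^ r ≤ L₁ ^ r * ((1+t)*(1+δ*t)) := by
      have hB : L₂ ^ r ≤ (L₁ * (1+t)) ^ r :=
        Real.rpow_le_rpow (by linarith) hA (by linarith)
      have hB' : (L₁ * (1+t)) ^ r = L₁ ^ r * (1+t) ^ r :=
        Real.mul_rpow (by linarith) (by linarith)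
      have hC : (1+t) ^ r ≤ (1+t)*(1+δ*t) := by
        have hsplit : (1+t) ^ r = (1+t) * (1+t) ^ δ := by
          rw [hrdef, Real.rpow_add (by linarith), Real.rpow_one]
        have hbern : (1+t) ^ δ ≤ 1 + δ * t :=
          rpow_one_add_le_one_add_mul_self (by linarith) hδ0.le (by linarith)
        rw [hsplit]
        apply mul_le_mul_of_nonneg_left hbern (by linarith)
      calc L₂ ^ r ≤ L₁ ^ r * (1+t) ^ r := by rw [← hB']; exact hB
        _ ≤ L₁ ^ r * ((1+t)*(1+δ*t)) := by
            apply mul_le_mul_of_nonneg_left hC (Real.rpow_nonneg (by linarith) _)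
    -- numeric step
    have hnum : (1+u)*((1+t)*(1+δ*t)) ≤ 1 + u + q*t := by
      have ht10 : t ≤ 1/10 := htu.trans (huδ.trans (by linarith))
      have hu10 : u ≤ 1/10 := huδ.trans (by linarith)
      nlinarith [mul_le_mul_of_nonneg_right ht10 (mul_nonneg hδ0.le ht0.le),
        mul_le_mul_of_nonneg_right huδ ht0.le,
        mul_le_mul_of_nonneg_right hu10 (mul_nonneg hδ0.le ht0.le),
        mul_le_mul_of_nonneg_right hu10 (mul_nonneg (mul_nonneg hδ0.le ht0.le) ht0.le),
        mul_nonneg (by linarith : (0:ℝ) ≤ q - 1 - 2*δ) ht0.le,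
        mul_nonneg hδ0.le ht0.le]
    -- combine
    have hmain : (X+2) * L₂ ^ r ≤ (1 + u + q*t) * ((X+1) * L₁ ^ r) := by
      have h1 : (X+2) * L₂ ^ r ≤ (X+2) * (L₁ ^ r * ((1+t)*(1+δ*t))) :=
        mul_le_mul_of_nonneg_left hBC (by linarith)
      have h2 : (X+2) = (X+1)*(1+u) := by
        rw [hudef]
        field_simp
        ring
      have hL1r : (0:ℝ) ≤ L₁ ^ r := Real.rpow_nonneg (by linarith) _
      calc (X+2) * L₂ ^ r ≤ (X+2) * (L₁ ^ r * ((1+t)*(1+δ*t))) := h1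
        _ = (X+1) * ((1+u)*((1+t)*(1+δ*t))) * L₁ ^ r := by rw [h2]; ring
        _ ≤ (X+1) * (1 + u + q*t) * L₁ ^ r := by
            apply mul_le_mul_of_nonneg_right _ hL1r
            apply mul_le_mul_of_nonneg_left hnum (by linarith)
        _ = (1 + u + q*t) * ((X+1) * L₁ ^ r) := by ring
    -- rewrite f values
    have hfval : ∀ n : ℕ, 3 ≤ n → f n = ((n:ℝ) * (Real.log n) ^ r)⁻¹ := by
      intro n hn
      simp only [hfdef]
      rw [max_eq_right (hlogge n hn)]
    have hf1 : f (x+1) = ((X+1) * L₁ ^ r)⁻¹ := by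
      rw [hfval (x+1) (by omega)]
      push_cast
      rw [← hXdef, ← hL1def]
    have hf2 : f (x+2) = ((X+2) * L₂ ^ r)⁻¹ := by
      rw [hfval (x+2) (by omega)]
      push_cast
      rw [← hXdef, ← hL2def]
    have hL1r : (0:ℝ) < L₁ ^ r := Real.rpow_pos_of_pos (by linarith) _
    have hL2r : (0:ℝ) < L₂ ^ r := Real.rpow_pos_of_pos (by linarith) _
    have hA1 : (0:ℝ) < (X+1) * L₁ ^ r := by nlinarith
    have hA2 : (0:ℝ) < (X+2) * L₂ ^ r := by nlinarith
    have hineq : ((X+1) * L₁ ^ r)⁻¹ ≤ (1 + u + q*t) * ((X+2) * L₂ ^ r)⁻¹ := by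
      rw [inv_eq_one_div, inv_eq_one_div, mul_one_div, div_le_div_iff₀ hA1 hA2]
      linarith [hmain]
    calc f (x+1) = ((X+1) * L₁ ^ r)⁻¹ := hf1
      _ ≤ (1 + u + q*t) * ((X+2) * L₂ ^ r)⁻¹ := hineq
      _ = (1 + u + q/((X+1) * L₁)) * f (x+2) := by
          rw [hf2, htdef]
          ring
  -- positivity of the rate factor
  have hRpos : ∀ x : ℕ, N ≤ x →
      0 < 1 + 1/((x:ℝ)+1) + q/(((x:ℝ)+1) * Real.log ((x:ℝ)+1)) := by
    intro x hx
    have hx3 : (3:ℝ) ≤ (x:ℝ) := by exact_mod_cast le_trans hN3 hx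
    have hcast : ((x+1:ℕ):ℝ) = (x:ℝ)+1 := by push_cast; ring
    have hL : 1 ≤ Real.log ((x:ℝ)+1) := by
      have := hlogge (x+1) (by omega)
      rwa [hcast] at this
    have h1 : 0 < 1/((x:ℝ)+1) := by positivity
    have h2 : 0 < q/(((x:ℝ)+1) * Real.log ((x:ℝ)+1)) := by
      apply div_pos (by linarith)
      nlinarith
    linarith
  -- induction
  have hdbpos : ∀ y : ℕ, 1 ≤ y → 0 < d y / b y := fun y hy => div_pos (hd y hy) (hb y hy)
  have hapos : ∀ x : ℕ, 0 < ∏ y ∈ Finset.Icc 1 x, d y / b y := by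
    intro x
    apply Finset.prod_pos
    intro y hy
    exact hdbpos y (Finset.mem_Icc.mp hy).1
  set a : ℕ → ℝ := fun x => ∏ y ∈ Finset.Icc 1 x, d y / b y with hadef
  have hstep : ∀ x : ℕ, a (x+1) = a x * (d (x+1) / b (x+1)) := by
    intro x
    simp only [hadef]
    rw [← Finset.prod_Icc_succ_top (Nat.one_le_iff_ne_zero.mpr (Nat.succ_ne_zero x))]
  have hdb : ∀ x : ℕ, N ≤ x → d (x+1) / b (x+1) ≤
      (1 + 1/((x:ℝ)+1) + q/(((x:ℝ)+1) * Real.log ((x:ℝ)+1)))⁻¹ := by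
    intro x hx
    have hMx : M ≤ x + 1 := le_trans hNM (by omega)
    have hh := h (x+1) hMx
    have hcast : ((x+1:ℕ):ℝ) = (x:ℝ)+1 := by push_cast; ring
    rw [hcast] at hh
    have hR := hRpos x hx
    have hbd : 0 < b (x+1) / d (x+1) := div_pos (hb _ (by omega)) (hd _ (by omega))
    have : d (x+1) / b (x+1) = (b (x+1) / d (x+1))⁻¹ := by
      rw [inv_div]
    rw [this]
    exact inv_anti₀ hR hh
  set K : ℝ := a N / f (N+1) with hKdef
  have hfN1 : 0 < f (N+1) := hfpos (N+1) (by omega)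
  have hK0 : 0 < K := div_pos (hapos N) hfN1
  have claim : ∀ k : ℕ, a (N + k) ≤ K * f (N + k + 1) := by
    intro k
    induction k with
    | zero =>
      simp only [Nat.add_zero]
      rw [hKdef, div_mul_cancel₀ _ hfN1.ne']
    | succ n ih =>
      have hx : N ≤ N + n := Nat.le_add_right _ _
      have hkey := keystep (N+n) hx
      have hdb' := hdb (N+n) hx
      have hR := hRpos (N+n) hx
      set R : ℝ := 1 + 1/(((N+n : ℕ) : ℝ) + 1) +
          q/((((N+n : ℕ) : ℝ) + 1) * Real.log (((N+n : ℕ) : ℝ) + 1)) with hRdef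
      have hdbp : 0 < d (N+n+1) / b (N+n+1) := hdbpos _ (by omega)
      have hfp1 : 0 < f (N+n+1) := hfpos _ (by omega)
      have hfp2 : 0 < f (N+n+2) := hfpos _ (by omega)
      show a (N+n+1) ≤ K * f (N+n+2)
      rw [hstep (N+n)]
      calc a (N+n) * (d (N+n+1)/b (N+n+1))
          ≤ (K * f (N+n+1)) * (d (N+n+1)/b (N+n+1)) :=
            mul_le_mul_of_nonneg_right ih hdbp.le
        _ ≤ (K * f (N+n+1)) * R⁻¹ :=
            mul_le_mul_of_nonneg_left hdb' (by positivity)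
        _ ≤ (K * (R * f (N+n+2))) * R⁻¹ :=
            mul_le_mul_of_nonneg_right
              (mul_le_mul_of_nonneg_left hkey hK0.le) (inv_nonneg.mpr hR.le)
        _ = K * f (N+n+2) := by
            field_simp
  -- conclude
  have hsum2 : Summable (fun n => K * f (n + (N+1))) := by
    simp only [hfdef]
    exact ((summable_nat_add_iff (N+1)).mpr (aux_summable14 hr1)).mul_left K
  rw [← summable_nat_add_iff N]
  refine Summable.of_nonneg_of_le (fun n => (hapos (n+N)).le) (fun n => ?_) hsum2
  have hcl := claim n
  have e1 : N + n = n + N := Nat.add_comm _ _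
  have e2 : N + n + 1 = n + (N+1) := by omega
  rw [e2, e1] at hcl
  exact hcl
end

section
/- Let b_x, d_x > 0 for x ≥ 1. Suppose there exists M > 1 such that for all x ≥ M, b_x/d_x ≤ 1 + 1/x + 1/(x log x). Then Σ_{x=1}^∞ Π_{y=1}^x (d_y/b_y) = ∞. -/
open Real Finset Filter

lemma key_ineq (t : ℝ) (ht : 3 ≤ t) :
    t * Real.log t + Real.log t + 1 ≤ (t + 1) * Real.log (t + 1) := by
  have ht0 : (0:ℝ) < t := by linarith
  have h1 : Real.log (t / (t+1)) ≤ t / (t+1) - 1 :=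
    Real.log_le_sub_one_of_pos (by positivity)
  rw [Real.log_div (by positivity) (by positivity)] at h1
  have h2 : t / (t+1) - 1 = -(1/(t+1)) := by field_simp; ring
  have h3 : Real.log t + 1/(t+1) ≤ Real.log (t+1) := by
    rw [h2] at h1; linarith
  have h4 : (t+1) * (Real.log t + 1/(t+1)) ≤ (t+1) * Real.log (t+1) :=
    mul_le_mul_of_nonneg_left h3 (by linarith)
  have h5 : (t+1) * (Real.log t + 1/(t+1)) = t * Real.log t + Real.log t + 1 := by
    field_simp
  linarith [h4, h5.symm.le]

lemma telescope_term (t : ℝ) (ht : 3 ≤ t) :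
    Real.log (Real.log (t+1)) - Real.log (Real.log t) ≤ 1 / (t * Real.log t) := by
  have ht1 : (1:ℝ) < t := by linarith
  have hlt : 0 < Real.log t := Real.log_pos ht1
  have hlt1 : 0 < Real.log (t+1) := Real.log_pos (by linarith)
  have h1 : Real.log (Real.log (t+1) / Real.log t) ≤ Real.log (t+1) / Real.log t - 1 :=
    Real.log_le_sub_one_of_pos (by positivity)
  rw [Real.log_div (ne_of_gt hlt1) (ne_of_gt hlt)] at h1
  have h2 : Real.log ((t+1)/t) ≤ (t+1)/t - 1 :=
    Real.log_le_sub_one_of_pos (by positivity)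
  rw [Real.log_div (by positivity) (by positivity)] at h2
  have h3 : (t+1)/t - 1 = 1/t := by field_simp; ring
  have h4 : Real.log (t+1) ≤ Real.log t + 1/t := by rw [h3] at h2; linarith
  have h5 : Real.log (t+1) / Real.log t - 1 ≤ 1 / (t * Real.log t) := by
    rw [div_sub_one (ne_of_gt hlt), div_le_div_iff₀ hlt (by positivity)]
    have hkey : (Real.log (t+1) - Real.log t) * (t * Real.log t)
        ≤ (1/t) * (t * Real.log t) :=
      mul_le_mul_of_nonneg_right (by linarith) (by positivity)
    have : (1/t) * (t * Real.log t) = 1 * Real.log t := by field_simp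
    linarith
  linarith

theorem stmt15 (b d : ℕ → ℝ)
    (hb : ∀ x ≥ 1, 0 < b x) (hd : ∀ x ≥ 1, 0 < d x)
    (M : ℕ) (hM : 1 < M)
    (h : ∀ x : ℕ, M ≤ x →
      b x / d x ≤ 1 + 1/(x : ℝ) + 1/((x : ℝ) * Real.log (x : ℝ))) :
    Tendsto (fun n : ℕ => ∑ x ∈ Finset.Icc 1 n, ∏ y ∈ Finset.Icc 1 x, d y / b y)
      atTop atTop := by
  set P : ℕ → ℝ := fun x => ∏ y ∈ Finset.Icc 1 x, d y / b y with hP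
  have hM2 : 2 ≤ M := hM
  have hM2R : (2:ℝ) ≤ (M:ℝ) := by exact_mod_cast hM2
  have hPpos : ∀ x, 0 < P x := by
    intro x
    apply Finset.prod_pos
    intro y hy
    have hy1 : 1 ≤ y := (Finset.mem_Icc.mp hy).1
    exact div_pos (hd y hy1) (hb y hy1)
  -- per-term bound
  have hterm : ∀ y : ℕ, M ≤ y → 3 ≤ (y:ℝ) →
      ((y:ℝ) * Real.log y) / (((y:ℝ)+1) * Real.log ((y:ℝ)+1)) ≤ d y / b y := by
    intro y hMy h3y
    have hylog : 0 < Real.log (y:ℝ) := Real.log_pos (by linarith)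
    have hy1log : 0 < Real.log ((y:ℝ)+1) := Real.log_pos (by linarith)
    have hden : 0 < (y:ℝ) * Real.log y := by positivity
    have hden1 : 0 < ((y:ℝ)+1) * Real.log ((y:ℝ)+1) := by positivity
    have hby : 0 < b y := hb y (by omega)
    have hdy : 0 < d y := hd y (by omega)
    have h1 : b y / d y ≤ (((y:ℝ)+1) * Real.log ((y:ℝ)+1)) / ((y:ℝ) * Real.log y) := by
      refine (h y hMy).trans ?_
      rw [le_div_iff₀ hden]
      have hexp : (1 + 1/(y:ℝ) + 1/((y:ℝ) * Real.log y)) * ((y:ℝ) * Real.log y)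
          = (y:ℝ) * Real.log y + Real.log y + 1 := by
        field_simp
      rw [hexp]
      exact key_ineq _ h3y
    rw [div_le_div_iff₀ hdy hden] at h1
    rw [div_le_div_iff₀ hden1 hby]
    nlinarith [h1, hden.le, hden1.le]
  set c : ℝ := P M * (((M:ℝ)+1) * Real.log ((M:ℝ)+1)) with hc
  have hMlog : 0 < Real.log ((M:ℝ)+1) := Real.log_pos (by linarith)
  have hcpos : 0 < c := mul_pos (hPpos M) (by positivity)
  -- lower bound on P n
  have hlower : ∀ n, M ≤ n → c / (((n:ℝ)+1) * Real.log ((n:ℝ)+1)) ≤ P n := by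
    intro n hn
    induction n, hn using Nat.le_induction with
    | base =>
      rw [hc, mul_div_assoc, div_self (by positivity), mul_one]
    | succ n hn ih =>
      have hnR : (M:ℝ) ≤ (n:ℝ) := by exact_mod_cast hn
      have hlogn1 : 0 < Real.log ((n:ℝ)+1) := Real.log_pos (by linarith)
      have hlogn2 : 0 < Real.log ((n:ℝ)+1+1) := Real.log_pos (by linarith)
      have hq1 : 0 < ((n:ℝ)+1) * Real.log ((n:ℝ)+1) := by positivity
      have hq2 : 0 < ((n:ℝ)+1+1) * Real.log ((n:ℝ)+1+1) := by positivity
      have hPsucc : P (n+1) = P n * (d (n+1) / b (n+1)) := by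
        rw [hP]
        exact Finset.prod_Icc_succ_top (by omega) _
      have hstep := hterm (n+1) (by omega) (by push_cast; linarith)
      have hcast : ((n+1:ℕ):ℝ) = (n:ℝ)+1 := by push_cast; ring
      rw [hcast] at hstep
      have hmul : c / (((n:ℝ)+1) * Real.log ((n:ℝ)+1)) *
          ((((n:ℝ)+1) * Real.log ((n:ℝ)+1)) / (((n:ℝ)+1+1) * Real.log ((n:ℝ)+1+1)))
          = c / (((n:ℝ)+1+1) * Real.log ((n:ℝ)+1+1)) := by
        field_simp
      have hle : c / (((n:ℝ)+1+1) * Real.log ((n:ℝ)+1+1)) ≤ P (n+1) := by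
        rw [hPsucc, ← hmul]
        exact mul_le_mul ih hstep (by positivity) (hPpos n).le
      rw [hcast]
      exact hle
  -- lower bound on partial sums via telescoping
  have hsum : ∀ n, M ≤ n →
      Real.log (Real.log ((n:ℝ)+2)) - Real.log (Real.log ((M:ℝ)+1)) ≤
        ∑ x ∈ Finset.Icc M n, 1 / (((x:ℝ)+1) * Real.log ((x:ℝ)+1)) := by
    intro n hn
    induction n, hn using Nat.le_induction with
    | base =>
      rw [Finset.Icc_self, Finset.sum_singleton]
      have := telescope_term ((M:ℝ)+1) (by linarith)
      have he : (M:ℝ)+1+1 = (M:ℝ)+2 := by ring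
      rw [he] at this
      linarith
    | succ n hn ih =>
      rw [Finset.sum_Icc_succ_top (by omega)]
      have hnR : (M:ℝ) ≤ (n:ℝ) := by exact_mod_cast hn
      have := telescope_term ((n:ℝ)+2) (by linarith)
      have hcast : ((n+1:ℕ):ℝ) = (n:ℝ)+1 := by push_cast; ring
      rw [hcast]
      have he1 : (n:ℝ)+2+1 = (n:ℝ)+1+2 := by ring
      have he2 : (n:ℝ)+1+1 = (n:ℝ)+2 := by ring
      rw [he1] at this
      rw [he2]
      linarith
  -- overall lower bound
  have hmain : ∀ n, M ≤ n →
      c * (Real.log (Real.log ((n:ℝ)+2)) - Real.log (Real.log ((M:ℝ)+1))) ≤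
        ∑ x ∈ Finset.Icc 1 n, P x := by
    intro n hn
    have h1 : ∑ x ∈ Finset.Icc M n, c / (((x:ℝ)+1) * Real.log ((x:ℝ)+1)) ≤
        ∑ x ∈ Finset.Icc M n, P x := by
      apply Finset.sum_le_sum
      intro x hx
      exact hlower x (Finset.mem_Icc.mp hx).1
    have h2 : ∑ x ∈ Finset.Icc M n, P x ≤ ∑ x ∈ Finset.Icc 1 n, P x := by
      apply Finset.sum_le_sum_of_subset_of_nonneg
      · apply Finset.Icc_subset_Icc_left; omega
      · intro x _ _; exact (hPpos x).le
    have h3 : c * (Real.log (Real.log ((n:ℝ)+2)) - Real.log (Real.log ((M:ℝ)+1))) ≤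
        ∑ x ∈ Finset.Icc M n, c / (((x:ℝ)+1) * Real.log ((x:ℝ)+1)) := by
      calc c * (Real.log (Real.log ((n:ℝ)+2)) - Real.log (Real.log ((M:ℝ)+1)))
          ≤ c * ∑ x ∈ Finset.Icc M n, 1 / (((x:ℝ)+1) * Real.log ((x:ℝ)+1)) :=
            mul_le_mul_of_nonneg_left (hsum n hn) hcpos.le
        _ = ∑ x ∈ Finset.Icc M n, c / (((x:ℝ)+1) * Real.log ((x:ℝ)+1)) := by
            rw [Finset.mul_sum]
            apply Finset.sum_congr rfl
            intro x _
            rw [mul_one_div]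
    linarith
  -- finish: the lower bound tends to atTop
  have htend : Tendsto (fun n : ℕ =>
      c * (Real.log (Real.log ((n:ℝ)+2)) - Real.log (Real.log ((M:ℝ)+1)))) atTop atTop := by
    apply Tendsto.const_mul_atTop hcpos
    apply tendsto_atTop_add_const_right
    apply Real.tendsto_log_atTop.comp
    apply Real.tendsto_log_atTop.comp
    exact tendsto_atTop_add_const_right _ _ tendsto_natCast_atTop_atTop
  apply tendsto_atTop_mono' atTop _ htend
  filter_upwards [eventually_ge_atTop M] with n hn
  exact hmain n hn
end
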